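/- Let φ ∈ L^∞(X,m), n ∈ ℕ, ε > 0, and let D be a measurable partition of unity on X such that for each g ∈ D the essential oscillation of the Birkhoff sum S_nφ = φ + φ∘α + ⋯ + φ∘α^{n−1} over the support of g does not exceed ε. Then for every α-invariant measure μ ∈ M_α(X,m), ε + ln‖A_φⁿ‖ ≥ μ(S_nφ) + τ_n(μ,D). -/

import Mathlib

open MeasureTheory Filter Topology
open scoped Classical ENNReal NNReal

noncomputable section

namespace TEntropyPaper

variable {X : Type*} [MeasurableSpace X]

/-- The mapping `α` is measurable and the shift operator `A f = f ∘ α` is bounded on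
`L¹(X, m)`; equivalently `m (α⁻¹ G) ≤ C · m G` for all measurable `G`. -/
def ShiftBounded (m : Measure X) (α : X → X) : Prop :=
  Measurable α ∧ ∃ C : ℝ≥0, ∀ s : Set X, MeasurableSet s → m (α ⁻¹' s) ≤ (C : ℝ≥0∞) * m s

/-- A positive normalized linear functional on `L^∞(X, m)`, encoded as a real-valued
map on functions `X → ℝ` which is linear and positive on essentially bounded
(strongly) measurable functions, respects `m`-a.e. equality, takes the value `1` at the
constant function `1` and (as a normalization) vanishes on functions not in `L^∞`. -/
structure PosFunctional (m : Measure X) where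
  toFun : (X → ℝ) → ℝ
  map_add' : ∀ f g : X → ℝ, MemLp f ⊤ m → MemLp g ⊤ m → toFun (f + g) = toFun f + toFun g
  map_smul' : ∀ (c : ℝ) (f : X → ℝ), MemLp f ⊤ m → toFun (c • f) = c * toFun f
  nonneg' : ∀ f : X → ℝ, MemLp f ⊤ m → (0 : X → ℝ) ≤ᵐ[m] f → 0 ≤ toFun f
  map_one' : toFun (fun _ => 1) = 1
  congr_ae' : ∀ f g : X → ℝ, MemLp f ⊤ m → MemLp g ⊤ m → f =ᵐ[m] g → toFun f = toFun g
  zero_of_ne' : ∀ f : X → ℝ, ¬ MemLp f ⊤ m → toFun f = 0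

/-- Evaluation of a functional in `M(X,m)` against the `L^∞` test functions. -/
def evalMap (m : Measure X) (μ : PosFunctional m) : {f : X → ℝ // MemLp f ⊤ m} → ℝ :=
  fun f => μ.toFun f.1

/-- The weak-* topology on `M(X,m)`: the topology of pointwise convergence on `L^∞`
test functions. -/
instance (m : Measure X) : TopologicalSpace (PosFunctional m) :=
  TopologicalSpace.induced (evalMap m) inferInstance

/-- `α`-invariance of a functional `μ ∈ M(X,m)`: `μ(f ∘ α) = μ(f)`. -/
def PosFunctional.Invariant (α : X → X) {m : Measure X} (μ : PosFunctional m) : Prop :=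
  ∀ f : X → ℝ, MemLp f ⊤ m → μ.toFun (f ∘ α) = μ.toFun f

/-- A measurable partition of unity on `X`: a finite set of nonnegative functions in
`L^∞(X,m)` summing to `1` almost everywhere. -/
def IsPartUnity (m : Measure X) (D : Finset (X → ℝ)) : Prop :=
  (∀ g ∈ D, MemLp g ⊤ m ∧ (0 : X → ℝ) ≤ᵐ[m] g) ∧ ∀ᵐ x ∂m, ∑ g ∈ D, g x = 1

/-- Birkhoff sum `S_n φ = φ + φ∘α + ⋯ + φ∘α^{n-1}`. -/
def birkhoff (α : X → X) (φ : X → ℝ) (n : ℕ) (x : X) : ℝ :=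
  ∑ i ∈ Finset.range n, φ (α^[i] x)

/-- The unit sphere of `L¹(X,m)`. -/
def UnitL1 (m : Measure X) : Set (X → ℝ) := {f | Integrable f m ∧ ∫ x, |f x| ∂m = 1}

/-- The integral `∫_X g · |f ∘ αⁿ| dm`. -/
def wInt (m : Measure X) (α : X → X) (n : ℕ) (g f : X → ℝ) : ℝ :=
  ∫ x, g x * |f (α^[n] x)| ∂m

/-- The summand `w · ln((∫_X g·|f∘αⁿ| dm)/w)` in the definition of `t`-entropy,
with values in `EReal`: it is `0` when `w = 0` and `-∞` when the integral vanishes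
while `w ≠ 0`. -/
def tauTermR (m : Measure X) (α : X → X) (n : ℕ) (w : ℝ) (f g : X → ℝ) : EReal :=
  if w = 0 then 0
  else if wInt m α n g f = 0 then ⊥
  else ((w * Real.log (wInt m α n g f / w) : ℝ) : EReal)

/-- `τ_n(w, D)` for an abstract weight function `w` on the elements of `D`. -/
def tauNDW (m : Measure X) (α : X → X) (n : ℕ) (D : Finset (X → ℝ))
    (w : (X → ℝ) → ℝ) : EReal :=
  if ∃ g ∈ D, (∫⁻ x, ENNReal.ofReal (g x) ∂m) = 0 ∧ 0 < w g then ⊥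
  else ⨆ f ∈ UnitL1 m, ∑ g ∈ D, tauTermR m α n (w g) f g

/-- `τ_n(μ, D)` for `μ ∈ M(X,m)` and a measurable partition of unity `D`. -/
def tauND (m : Measure X) (α : X → X) (μ : PosFunctional m) (n : ℕ)
    (D : Finset (X → ℝ)) : EReal :=
  tauNDW m α n D (fun g => μ.toFun g)

/-- `τ_n(μ) = inf_D τ_n(μ, D)` over all measurable partitions of unity `D`. -/
def tauN (m : Measure X) (α : X → X) (μ : PosFunctional m) (n : ℕ) : EReal :=
  ⨅ D ∈ {D : Finset (X → ℝ) | IsPartUnity m D}, tauND m α μ n D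

/-- The `t`-entropy `τ(μ) = inf_{n ≥ 1} τ_n(μ)/n`. -/
def tEntropy (m : Measure X) (α : X → X) (μ : PosFunctional m) : EReal :=
  ⨅ n : {k : ℕ // 0 < k}, ((((n : ℕ) : ℝ)⁻¹ : ℝ) : EReal) * tauN m α μ (n : ℕ)

/-- The operator norm `‖A_φⁿ‖` of the `n`-th power of the weighted shift operator
`A_φ f = e^φ · (f ∘ α)` on `L¹(X,m)`, i.e. the supremum of `∫ e^{S_nφ}|f∘αⁿ| dm`
over the unit sphere of `L¹`. -/
def weightedOpNorm (m : Measure X) (α : X → X) (φ : X → ℝ) (n : ℕ) : ℝ :=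
  sSup {r : ℝ | ∃ f ∈ UnitL1 m,
    r = ∫ x, Real.exp (birkhoff α φ n x) * |f (α^[n] x)| ∂m}

/-- `D_m`: the elements of `D` which are not `m`-a.e. zero (i.e. `∫ g dm > 0`). -/
def Dm (m : Measure X) (D : Finset (X → ℝ)) : Finset (X → ℝ) :=
  D.filter (fun g => (∫⁻ x, ENNReal.ofReal (g x) ∂m) ≠ 0)

/-- The simplex `M(D)` of probability measures on the finite set `D`, realized as
weight functions vanishing outside `D`. -/
def MD (D : Finset (X → ℝ)) : Set ((X → ℝ) → ℝ) :=
  {w | (∀ g ∈ D, 0 ≤ w g) ∧ (∑ g ∈ D, w g) = 1 ∧ ∀ g ∉ D, w g = 0}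

/-- The sum `Σ_{g ∈ D_m} w(g)·ln((∫ g·|f∘αⁿ| dm)/w(g))`. -/
def tauSumDm (m : Measure X) (α : X → X) (n : ℕ) (D : Finset (X → ℝ))
    (w : (X → ℝ) → ℝ) (f : X → ℝ) : EReal :=
  ∑ g ∈ Dm m D, tauTermR m α n (w g) f g

/-- `τ_n(w, D)` with the sum restricted to `D_m`, for `w ∈ M(D_m)`. -/
def tauDm (m : Measure X) (α : X → X) (n : ℕ) (D : Finset (X → ℝ))
    (w : (X → ℝ) → ℝ) : EReal :=
  ⨆ f ∈ UnitL1 m, tauSumDm m α n D w f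

/-- `w'` is an optimizing limit for `(w, n, D)`: there is a sequence of nonnegative
unit-norm `f_i ∈ L¹(X,m)` along which the supremum defining `τ_n(w,D)` is attained in
the limit and `w'(g) = lim_i ∫ g·(f_i∘αⁿ) dm` for each `g ∈ D_m`. -/
def IsOptLimit (m : Measure X) (α : X → X) (n : ℕ) (D : Finset (X → ℝ))
    (w w' : (X → ℝ) → ℝ) : Prop :=
  ∃ F : ℕ → (X → ℝ),
    (∀ i, F i ∈ UnitL1 m ∧ (0 : X → ℝ) ≤ᵐ[m] F i) ∧
    (∀ g ∈ Dm m D, Tendsto (fun i => wInt m α n g (F i)) atTop (𝓝 (w' g))) ∧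
    Tendsto (fun i => tauSumDm m α n D w (F i)) atTop (𝓝 (tauDm m α n D w))


section Proof

variable {m : Measure X} {α : X → X}

lemma memtop_bound {f : X → ℝ} (hf : MemLp f ⊤ m) :
    ∃ K : ℝ, 0 ≤ K ∧ ∀ᵐ x ∂m, |f x| ≤ K := by
  refine ⟨(eLpNormEssSup f m).toReal, ENNReal.toReal_nonneg, ?_⟩
  have hlt : eLpNormEssSup f m < ⊤ := by
    have h2 := hf.2; rwa [eLpNorm_exponent_top] at h2
  filter_upwards [ae_le_eLpNormEssSup (f := f) (μ := m)] with x hx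
  have := ENNReal.toReal_mono hlt.ne hx
  simpa [Real.norm_eq_abs] using this

lemma memtop_mul {f g : X → ℝ} (hf : MemLp f ⊤ m) (hg : MemLp g ⊤ m) :
    MemLp (fun x => f x * g x) ⊤ m := by
  obtain ⟨Kf, hKf0, hKf⟩ := memtop_bound hf
  obtain ⟨Kg, hKg0, hKg⟩ := memtop_bound hg
  refine memLp_top_of_bound (hf.1.mul hg.1) (Kf * Kg) ?_
  filter_upwards [hKf, hKg] with x h1 h2
  simp only [Real.norm_eq_abs, abs_mul]
  exact mul_le_mul h1 h2 (abs_nonneg _) hKf0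

lemma iterate_measure_le (hmeas : Measurable α) {C : ℝ≥0}
    (hC : ∀ s : Set X, MeasurableSet s → m (α ⁻¹' s) ≤ (C : ℝ≥0∞) * m s) (k : ℕ) :
    m.map (α^[k]) ≤ ((C : ℝ≥0∞) ^ k) • m := by
  have key : ∀ k, ∀ s : Set X, MeasurableSet s →
      m (α^[k] ⁻¹' s) ≤ (C : ℝ≥0∞) ^ k * m s := by
    intro k
    induction k with
    | zero => intro s hs; simp
    | succ j ih =>
        intro s hs
        have h1 : (α^[j+1]) ⁻¹' s = α^[j] ⁻¹' (α ⁻¹' s) := by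
          rw [Function.iterate_succ']; rfl
        rw [h1]
        calc m (α^[j] ⁻¹' (α ⁻¹' s)) ≤ (C:ℝ≥0∞)^j * m (α ⁻¹' s) := ih _ (hmeas hs)
          _ ≤ (C:ℝ≥0∞)^j * ((C:ℝ≥0∞) * m s) := mul_le_mul_right (hC s hs) _
          _ = (C:ℝ≥0∞)^(j+1) * m s := by rw [pow_succ]; ring
  rw [Measure.le_iff]
  intro s hs
  rw [Measure.map_apply (hmeas.iterate k) hs, Measure.smul_apply, smul_eq_mul]
  exact key k s hs

lemma ae_comp_iterate (hmeas : Measurable α) {C : ℝ≥0}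
    (hC : ∀ s : Set X, MeasurableSet s → m (α ⁻¹' s) ≤ (C : ℝ≥0∞) * m s) (k : ℕ)
    {P : X → Prop} (h : ∀ᵐ x ∂m, P x) : ∀ᵐ x ∂m, P (α^[k] x) := by
  have hac : m.map (α^[k]) ≪ m :=
    Measure.absolutelyContinuous_of_le_smul (iterate_measure_le hmeas hC k)
  exact ae_of_ae_map (hmeas.iterate k).aemeasurable (h.filter_mono hac.ae_le)

lemma asm_comp_iterate (hmeas : Measurable α) {C : ℝ≥0}
    (hC : ∀ s : Set X, MeasurableSet s → m (α ⁻¹' s) ≤ (C : ℝ≥0∞) * m s) (k : ℕ)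
    {f : X → ℝ} (hf : AEStronglyMeasurable f m) :
    AEStronglyMeasurable (fun x => f (α^[k] x)) m := by
  have hac : m.map (α^[k]) ≪ m :=
    Measure.absolutelyContinuous_of_le_smul (iterate_measure_le hmeas hC k)
  exact (hf.mono_ac hac).comp_aemeasurable (hmeas.iterate k).aemeasurable

lemma integrable_comp_iterate (hmeas : Measurable α) {C : ℝ≥0}
    (hC : ∀ s : Set X, MeasurableSet s → m (α ⁻¹' s) ≤ (C : ℝ≥0∞) * m s) (k : ℕ)
    {f : X → ℝ} (hf : Integrable f m) :
    Integrable (fun x => f (α^[k] x)) m ∧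
      ∫ x, |f (α^[k] x)| ∂m ≤ (C : ℝ)^k * ∫ x, |f x| ∂m := by
  have hle := iterate_measure_le hmeas hC k
  have hac := Measure.absolutelyContinuous_of_le_smul hle
  have hasm : AEStronglyMeasurable (fun x => f (α^[k] x)) m :=
    (hf.1.mono_ac hac).comp_aemeasurable (hmeas.iterate k).aemeasurable
  have hlin : ∫⁻ x, ‖f (α^[k] x)‖₊ ∂m ≤ (C:ℝ≥0∞)^k * ∫⁻ x, ‖f x‖₊ ∂m := by
    have h1 : ∫⁻ x, ‖f (α^[k] x)‖₊ ∂m = ∫⁻ y, ‖f y‖₊ ∂(m.map (α^[k])) :=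
      (lintegral_map' (hf.1.mono_ac hac).enorm (hmeas.iterate k).aemeasurable).symm
    rw [h1]
    calc ∫⁻ y, ‖f y‖₊ ∂(m.map (α^[k])) ≤ ∫⁻ y, ‖f y‖₊ ∂(((C:ℝ≥0∞)^k) • m) :=
          lintegral_mono' hle le_rfl
      _ = (C:ℝ≥0∞)^k * ∫⁻ y, ‖f y‖₊ ∂m := lintegral_smul_measure _ _
  have hfin : (C:ℝ≥0∞)^k * ∫⁻ x, ‖f x‖₊ ∂m < ⊤ :=
    ENNReal.mul_lt_top (by simp [ENNReal.pow_lt_top, ENNReal.coe_lt_top]) hf.2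
  have hint : Integrable (fun x => f (α^[k] x)) m := ⟨hasm, lt_of_le_of_lt hlin hfin⟩
  refine ⟨hint, ?_⟩
  have e1 : ∫ x, |f (α^[k] x)| ∂m = (∫⁻ x, ‖f (α^[k] x)‖₊ ∂m).toReal := by
    change _ = (∫⁻ x, ‖f (α^[k] x)‖ₑ ∂m).toReal
    rw [← integral_norm_eq_lintegral_enorm hasm]
    simp [Real.norm_eq_abs]
  have e2 : ∫ x, |f x| ∂m = (∫⁻ x, ‖f x‖₊ ∂m).toReal := by
    change _ = (∫⁻ x, ‖f x‖ₑ ∂m).toReal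
    rw [← integral_norm_eq_lintegral_enorm hf.1]
    simp [Real.norm_eq_abs]
  rw [e1, e2]
  calc (∫⁻ x, ‖f (α^[k] x)‖₊ ∂m).toReal
      ≤ ((C:ℝ≥0∞)^k * ∫⁻ x, ‖f x‖₊ ∂m).toReal := ENNReal.toReal_mono hfin.ne hlin
    _ = (C:ℝ)^k * (∫⁻ x, ‖f x‖₊ ∂m).toReal := by
        rw [ENNReal.toReal_mul, ENNReal.toReal_pow, ENNReal.coe_toReal]

lemma ereal_coe_sum {ι : Type*} (s : Finset ι) (r : ι → ℝ) :
    ((∑ i ∈ s, r i : ℝ) : EReal) = ∑ i ∈ s, ((r i : ℝ) : EReal) := by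
  classical
  induction s using Finset.induction_on with
  | empty => simp
  | @insert a s ha ih => rw [Finset.sum_insert ha, Finset.sum_insert ha, EReal.coe_add, ih]

lemma PosFunctional.map_zero'' (μ : PosFunctional m) : μ.toFun 0 = 0 := by
  have h := μ.map_smul' 0 (fun _ => 1) (memLp_top_const 1)
  simpa using h

lemma PosFunctional.mono' (μ : PosFunctional m) {f g : X → ℝ} (hf : MemLp f ⊤ m)
    (hg : MemLp g ⊤ m) (h : f ≤ᵐ[m] g) : μ.toFun f ≤ μ.toFun g := by
  have hkey : μ.toFun (f + (g - f)) = μ.toFun f + μ.toFun (g - f) :=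
    μ.map_add' f (g - f) hf (hg.sub hf)
  have hfg : f + (g - f) = g := by ring
  rw [hfg] at hkey
  have hpos : 0 ≤ μ.toFun (g - f) := by
    refine μ.nonneg' _ (hg.sub hf) ?_
    filter_upwards [h] with x hx
    simpa using hx
  linarith

lemma PosFunctional.map_sum'' (μ : PosFunctional m) {ι : Type*} (s : Finset ι)
    (F : ι → X → ℝ) (hF : ∀ i ∈ s, MemLp (F i) ⊤ m) :
    μ.toFun (∑ i ∈ s, F i) = ∑ i ∈ s, μ.toFun (F i) := by
  classical
  induction s using Finset.induction_on with
  | empty => simpa using μ.map_zero''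
  | @insert a s ha ih =>
      rw [Finset.sum_insert ha, Finset.sum_insert ha,
        μ.map_add' _ _ (hF a (Finset.mem_insert_self a s))
          (memLp_finset_sum' s fun i hi => hF i (Finset.mem_insert_of_mem hi)),
        ih (fun i hi => hF i (Finset.mem_insert_of_mem hi))]

end Proof


/-- If the essential oscillation of the Birkhoff sum `S_nφ` over the support of every
element of the measurable partition of unity `D` does not exceed `ε`, then for every
`α`-invariant `μ ∈ M_α(X,m)` one has `ε + ln‖A_φⁿ‖ ≥ μ(S_nφ) + τ_n(μ, D)`. -/
theorem eps_add_log_norm_ge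
    (m : Measure X) [SigmaFinite m] (α : X → X) (hα : ShiftBounded m α)
    (φ : X → ℝ) (hφ : MemLp φ ⊤ m) (n : ℕ) (hn : 0 < n) (ε : ℝ) (hε : 0 < ε)
    (D : Finset (X → ℝ)) (hD : IsPartUnity m D)
    (hosc : ∀ g ∈ D, ∃ c : ℝ, ∀ᵐ x ∂m, g x ≠ 0 → birkhoff α φ n x ∈ Set.Icc c (c + ε))
    (μ : PosFunctional m) (hμ : μ.Invariant α) :
    (μ.toFun (birkhoff α φ n) : EReal) + tauND m α μ n D
      ≤ ((ε + Real.log (weightedOpNorm m α φ n) : ℝ) : EReal) := by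
  classical
  obtain ⟨hmeas, C, hC⟩ := hα
  obtain ⟨hDmem, hDsum⟩ := hD
  choose! c hc using hosc
  set S : X → ℝ := birkhoff α φ n with hSdef
  set N : ℝ := weightedOpNorm m α φ n with hNdef
  obtain ⟨K, hK0, hKb⟩ := memtop_bound hφ
  -- S is bounded and a.e. strongly measurable
  have hSasm : AEStronglyMeasurable S m := by
    rw [hSdef]
    apply Finset.aestronglyMeasurable_fun_sum
    intro i _
    exact asm_comp_iterate hmeas hC i hφ.1
  have hSK : ∀ᵐ x ∂m, |S x| ≤ n * K := by
    have hall : ∀ᵐ x ∂m, ∀ i : ℕ, |φ (α^[i] x)| ≤ K :=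
      ae_all_iff.mpr fun i => ae_comp_iterate hmeas hC i hKb
    filter_upwards [hall] with x hx
    calc |S x| ≤ ∑ i ∈ Finset.range n, |φ (α^[i] x)| := by
          rw [hSdef]; exact Finset.abs_sum_le_sum_abs _ _
      _ ≤ ∑ _i ∈ Finset.range n, K := Finset.sum_le_sum (fun i _ => hx i)
      _ = n * K := by simp [mul_comm]
  have hSmem : MemLp S ⊤ m := by
    refine memLp_top_of_bound hSasm (n * K) ?_
    filter_upwards [hSK] with x hx
    simpa [Real.norm_eq_abs] using hx
  -- exponential of S
  have hexpasm : AEStronglyMeasurable (fun x => Real.exp (S x)) m :=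
    Real.continuous_exp.comp_aestronglyMeasurable hSasm
  have hexpbd : ∀ᵐ x ∂m, Real.exp (S x) ≤ Real.exp (n * K) := by
    filter_upwards [hSK] with x hx
    exact Real.exp_le_exp.mpr (le_trans (le_abs_self _) hx)
  -- the sSup set is bounded above
  have hub : ∀ r ∈ {r : ℝ | ∃ f ∈ UnitL1 m,
      r = ∫ x, Real.exp (birkhoff α φ n x) * |f (α^[n] x)| ∂m},
      r ≤ Real.exp (n * K) * (C : ℝ)^n := by
    rintro r ⟨f, ⟨hfint, hf1⟩, rfl⟩
    obtain ⟨hfcint, hfcle⟩ := integrable_comp_iterate hmeas hC n hfint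
    have hint1 : Integrable (fun x => |f (α^[n] x)|) m := hfcint.abs
    have hint2 : Integrable (fun x => Real.exp (S x) * |f (α^[n] x)|) m := by
      refine hint1.bdd_mul (c := Real.exp (↑n * K)) hexpasm ?_
      filter_upwards [hexpbd] with x hx
      simpa [Real.norm_eq_abs, abs_of_pos (Real.exp_pos _)] using hx
    have h2 : ∫ x, Real.exp (S x) * |f (α^[n] x)| ∂m
        ≤ ∫ x, Real.exp (n * K) * |f (α^[n] x)| ∂m := by
      refine integral_mono_ae hint2 (hint1.const_mul _) ?_
      filter_upwards [hexpbd] with x hx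
      exact mul_le_mul_of_nonneg_right hx (abs_nonneg _)
    rw [← hSdef]
    calc ∫ x, Real.exp (S x) * |f (α^[n] x)| ∂m
        ≤ ∫ x, Real.exp (n * K) * |f (α^[n] x)| ∂m := h2
      _ = Real.exp (n * K) * ∫ x, |f (α^[n] x)| ∂m := integral_const_mul _ _
      _ ≤ Real.exp (n * K) * ((C : ℝ)^n * ∫ x, |f x| ∂m) :=
          mul_le_mul_of_nonneg_left hfcle (Real.exp_nonneg _)
      _ = Real.exp (n * K) * (C : ℝ)^n := by rw [hf1]; ring
  have hbdd : BddAbove {r : ℝ | ∃ f ∈ UnitL1 m,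
      r = ∫ x, Real.exp (birkhoff α φ n x) * |f (α^[n] x)| ∂m} :=
    ⟨Real.exp (n * K) * (C : ℝ)^n, fun r hr => hub r hr⟩
  -- weights
  have hw0 : ∀ g ∈ D, 0 ≤ μ.toFun g := fun g hg =>
    μ.nonneg' g (hDmem g hg).1 (hDmem g hg).2
  have hone : MemLp (fun _ : X => (1:ℝ)) ⊤ m := memLp_top_const 1
  have hsumD : MemLp (∑ g ∈ D, g) ⊤ m :=
    memLp_finset_sum' D fun g hg => (hDmem g hg).1
  have hw1 : ∑ g ∈ D, μ.toFun g = 1 := by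
    have h1 := μ.map_sum'' D (fun g => g) (fun g hg => (hDmem g hg).1)
    have h2 : μ.toFun (∑ g ∈ D, g) = μ.toFun (fun _ => (1:ℝ)) := by
      refine μ.congr_ae' _ _ hsumD hone ?_
      filter_upwards [hDsum] with x hx
      simpa [Finset.sum_apply] using hx
    rw [h1] at h2
    rw [h2, μ.map_one']
  -- bound on μ(S)
  have hgSmem : ∀ g ∈ D, MemLp (fun x => g x * S x) ⊤ m := fun g hg =>
    memtop_mul (hDmem g hg).1 hSmem
  have hμS_le : μ.toFun S ≤ (∑ g ∈ D, μ.toFun g * c g) + ε := by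
    have hsplit : μ.toFun S = ∑ g ∈ D, μ.toFun (fun x => g x * S x) := by
      have h1 : μ.toFun S = μ.toFun (∑ g ∈ D, fun x => g x * S x) := by
        refine μ.congr_ae' _ _ hSmem
          (memLp_finset_sum' D fun g hg => hgSmem g hg) ?_
        filter_upwards [hDsum] with x hx
        rw [Finset.sum_apply]
        rw [← Finset.sum_mul, hx, one_mul]
      rw [h1, μ.map_sum'' D _ (fun g hg => hgSmem g hg)]
    have hterm : ∀ g ∈ D, μ.toFun (fun x => g x * S x) ≤ (c g + ε) * μ.toFun g := by
      intro g hg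
      have hmemg := (hDmem g hg).1
      have hscaled : μ.toFun (fun x => (c g + ε) * g x) = (c g + ε) * μ.toFun g := by
        have h := μ.map_smul' (c g + ε) g hmemg
        exact h
      refine le_trans (μ.mono' (hgSmem g hg)
        (memtop_mul (memLp_top_const (c g + ε)) hmemg) ?_) (le_of_eq hscaled)
      filter_upwards [(hDmem g hg).2, hc g hg] with x hx0 hxc
      by_cases hgx : g x = 0
      · simp [hgx]
      · have h1 : S x ≤ c g + ε := (hxc hgx).2
        calc g x * S x ≤ g x * (c g + ε) := mul_le_mul_of_nonneg_left h1 hx0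
          _ = (c g + ε) * g x := by ring
    calc μ.toFun S = ∑ g ∈ D, μ.toFun (fun x => g x * S x) := hsplit
      _ ≤ ∑ g ∈ D, (c g + ε) * μ.toFun g := Finset.sum_le_sum hterm
      _ = (∑ g ∈ D, μ.toFun g * c g) + ε * ∑ g ∈ D, μ.toFun g := by
          rw [Finset.mul_sum, ← Finset.sum_add_distrib]
          exact Finset.sum_congr rfl fun g _ => by ring
      _ = (∑ g ∈ D, μ.toFun g * c g) + ε := by rw [hw1, mul_one]
  -- main reduction
  rw [tauND, tauNDW]
  by_cases hbot : ∃ g ∈ D, (∫⁻ x, ENNReal.ofReal (g x) ∂m) = 0 ∧ 0 < μ.toFun g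
  · rw [if_pos hbot, EReal.add_bot]
    exact bot_le
  rw [if_neg hbot]
  have key : ∀ f ∈ UnitL1 m,
      (∑ g ∈ D, tauTermR m α n (μ.toFun g) f g)
        ≤ ((ε + Real.log N - μ.toFun S : ℝ) : EReal) := by
    rintro f ⟨hfint, hf1⟩
    obtain ⟨hfcint, hfcle⟩ := integrable_comp_iterate hmeas hC n hfint
    have habs : Integrable (fun x => |f (α^[n] x)|) m := hfcint.abs
    have hInonneg : ∀ g ∈ D, 0 ≤ wInt m α n g f := by
      intro g hg
      refine integral_nonneg_of_ae ?_
      filter_upwards [(hDmem g hg).2] with x hx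
      exact mul_nonneg hx (abs_nonneg _)
    have hEint : Integrable (fun x => Real.exp (S x) * |f (α^[n] x)|) m := by
      refine habs.bdd_mul (c := Real.exp (↑n * K)) hexpasm ?_
      filter_upwards [hexpbd] with x hx
      simpa [Real.norm_eq_abs, abs_of_pos (Real.exp_pos _)] using hx
    set Jf : (X → ℝ) → ℝ :=
      fun g => ∫ x, g x * (Real.exp (S x) * |f (α^[n] x)|) ∂m with hJdef
    have hJint : ∀ g ∈ D,
        Integrable (fun x => g x * (Real.exp (S x) * |f (α^[n] x)|)) m := by
      intro g hg
      obtain ⟨Kg, _, hKg⟩ := memtop_bound (hDmem g hg).1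
      refine hEint.bdd_mul (c := Kg) (hDmem g hg).1.1 ?_
      filter_upwards [hKg] with x hx
      simpa [Real.norm_eq_abs] using hx
    have hIint : ∀ g ∈ D, Integrable (fun x => g x * |f (α^[n] x)|) m := by
      intro g hg
      obtain ⟨Kg, _, hKg⟩ := memtop_bound (hDmem g hg).1
      refine habs.bdd_mul (c := Kg) (hDmem g hg).1.1 ?_
      filter_upwards [hKg] with x hx
      simpa [Real.norm_eq_abs] using hx
    have hJnonneg : ∀ g ∈ D, 0 ≤ Jf g := by
      intro g hg
      refine integral_nonneg_of_ae ?_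
      filter_upwards [(hDmem g hg).2] with x hx
      exact mul_nonneg hx (mul_nonneg (Real.exp_nonneg _) (abs_nonneg _))
    have hIJ : ∀ g ∈ D, Real.exp (c g) * wInt m α n g f ≤ Jf g := by
      intro g hg
      rw [wInt, ← integral_const_mul]
      refine integral_mono_ae ((hIint g hg).const_mul _) (hJint g hg) ?_
      filter_upwards [(hDmem g hg).2, hc g hg] with x hx0 hxc
      by_cases hgx : g x = 0
      · simp [hgx]
      · have h1 : c g ≤ S x := (hxc hgx).1
        have h2 : Real.exp (c g) ≤ Real.exp (S x) := Real.exp_le_exp.mpr h1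
        calc Real.exp (c g) * (g x * |f (α^[n] x)|)
            = g x * (Real.exp (c g) * |f (α^[n] x)|) := by ring
          _ ≤ g x * (Real.exp (S x) * |f (α^[n] x)|) :=
              mul_le_mul_of_nonneg_left
                (mul_le_mul_of_nonneg_right h2 (abs_nonneg _)) hx0
    have hJsum : ∑ g ∈ D, Jf g = ∫ x, Real.exp (S x) * |f (α^[n] x)| ∂m := by
      rw [← integral_finset_sum D (fun g hg => hJint g hg)]
      refine integral_congr_ae ?_
      filter_upwards [hDsum] with x hx
      rw [← Finset.sum_mul, hx, one_mul]
    have hNge : ∫ x, Real.exp (S x) * |f (α^[n] x)| ∂m ≤ N := by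
      rw [hNdef, weightedOpNorm]
      exact le_csSup hbdd ⟨f, ⟨hfint, hf1⟩, by rw [hSdef]⟩
    by_cases hbad : ∃ g ∈ D, μ.toFun g ≠ 0 ∧ wInt m α n g f = 0
    · obtain ⟨g0, hg0, hwne, hI0⟩ := hbad
      have hterm : tauTermR m α n (μ.toFun g0) f g0 = ⊥ := by
        rw [tauTermR, if_neg hwne, if_pos hI0]
      rw [← Finset.add_sum_erase D _ hg0, hterm, EReal.bot_add]
      exact bot_le
    push_neg at hbad
    have hsum_eq : (∑ g ∈ D, tauTermR m α n (μ.toFun g) f g)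
        = ((∑ g ∈ D, if μ.toFun g = 0 then 0
            else μ.toFun g * Real.log (wInt m α n g f / μ.toFun g) : ℝ) : EReal) := by
      rw [ereal_coe_sum]
      refine Finset.sum_congr rfl fun g hg => ?_
      by_cases hwg : μ.toFun g = 0
      · simp [tauTermR, hwg]
      · rw [tauTermR, if_neg hwg, if_neg (hbad g hg hwg), if_neg hwg]
    rw [hsum_eq, EReal.coe_le_coe_iff]
    set D2 : Finset (X → ℝ) := D.filter (fun g => μ.toFun g ≠ 0) with hD2
    have hTeq : (∑ g ∈ D, if μ.toFun g = 0 then 0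
          else μ.toFun g * Real.log (wInt m α n g f / μ.toFun g))
        = ∑ g ∈ D2, μ.toFun g * Real.log (wInt m α n g f / μ.toFun g) := by
      rw [hD2, Finset.sum_filter]
      refine Finset.sum_congr rfl fun g hg => ?_
      by_cases h : μ.toFun g = 0 <;> simp [h]
    have hD2sum : ∑ g ∈ D2, μ.toFun g = 1 := by
      rw [hD2, Finset.sum_filter_ne_zero, hw1]
    have hD2ne : D2.Nonempty := by
      by_contra h
      rw [Finset.not_nonempty_iff_eq_empty] at h
      rw [h, Finset.sum_empty] at hD2sum
      norm_num at hD2sum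
    have hmemD2 : ∀ g ∈ D2, g ∈ D ∧ 0 < μ.toFun g ∧ 0 < wInt m α n g f ∧ 0 < Jf g := by
      intro g hg
      rw [hD2, Finset.mem_filter] at hg
      obtain ⟨hgD, hwne⟩ := hg
      have hwpos := lt_of_le_of_ne (hw0 g hgD) (Ne.symm hwne)
      have hIpos := lt_of_le_of_ne (hInonneg g hgD) (Ne.symm (hbad g hgD hwne))
      have hJpos : 0 < Jf g :=
        lt_of_lt_of_le (mul_pos (Real.exp_pos _) hIpos) (hIJ g hgD)
      exact ⟨hgD, hwpos, hIpos, hJpos⟩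
    have hstep1 : ∀ g ∈ D2, μ.toFun g * Real.log (wInt m α n g f / μ.toFun g)
        ≤ μ.toFun g * (Real.log (Jf g / μ.toFun g) - c g) := by
      intro g hg
      obtain ⟨hgD, hwpos, hIpos, hJpos⟩ := hmemD2 g hg
      have hIle : wInt m α n g f ≤ Real.exp (-(c g)) * Jf g := by
        have h2 : wInt m α n g f
            = Real.exp (-(c g)) * (Real.exp (c g) * wInt m α n g f) := by
          rw [← mul_assoc, ← Real.exp_add]
          simp
        rw [h2]
        exact mul_le_mul_of_nonneg_left (hIJ g hgD) (Real.exp_nonneg _)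
      have hdiv : wInt m α n g f / μ.toFun g
          ≤ Real.exp (-(c g)) * (Jf g / μ.toFun g) := by
        rw [← mul_div_assoc]
        exact div_le_div_of_nonneg_right hIle hwpos.le
      have hlog : Real.log (wInt m α n g f / μ.toFun g)
          ≤ Real.log (Jf g / μ.toFun g) - c g := by
        calc Real.log (wInt m α n g f / μ.toFun g)
            ≤ Real.log (Real.exp (-(c g)) * (Jf g / μ.toFun g)) :=
              Real.log_le_log (div_pos hIpos hwpos) hdiv
          _ = Real.log (Jf g / μ.toFun g) - c g := by
              rw [Real.log_mul (Real.exp_ne_zero _)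
                (ne_of_gt (div_pos hJpos hwpos)), Real.log_exp]
              ring
      exact mul_le_mul_of_nonneg_left hlog hwpos.le
    have hjensen : ∑ g ∈ D2, μ.toFun g * Real.log (Jf g / μ.toFun g)
        ≤ Real.log (∑ g ∈ D2, Jf g) := by
      have hconc : ConcaveOn ℝ (Set.Ioi (0:ℝ)) Real.log :=
        strictConcaveOn_log_Ioi.concaveOn
      have h := hconc.le_map_sum (t := D2) (w := fun g => μ.toFun g)
        (p := fun g => Jf g / μ.toFun g)
        (fun g hg => (hmemD2 g hg).2.1.le) hD2sum
        (fun g hg => Set.mem_Ioi.mpr (div_pos (hmemD2 g hg).2.2.2 (hmemD2 g hg).2.1))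
      have heq : ∑ g ∈ D2, μ.toFun g • (Jf g / μ.toFun g) = ∑ g ∈ D2, Jf g :=
        Finset.sum_congr rfl fun g hg => by
          rw [smul_eq_mul, mul_comm, div_mul_cancel₀ _ (ne_of_gt (hmemD2 g hg).2.1)]
      rw [heq] at h
      simpa [smul_eq_mul] using h
    have hJD2pos : 0 < ∑ g ∈ D2, Jf g :=
      Finset.sum_pos (fun g hg => (hmemD2 g hg).2.2.2) hD2ne
    have hJD2le : ∑ g ∈ D2, Jf g ≤ ∑ g ∈ D, Jf g := by
      rw [hD2]
      exact Finset.sum_le_sum_of_subset_of_nonneg (Finset.filter_subset _ _)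
        (fun g hg _ => hJnonneg g hg)
    have hDN : ∑ g ∈ D, Jf g ≤ N := by rw [hJsum]; exact hNge
    have hlogn : Real.log (∑ g ∈ D2, Jf g) ≤ Real.log N :=
      Real.log_le_log hJD2pos (le_trans hJD2le hDN)
    have hwc : ∑ g ∈ D2, μ.toFun g * c g = ∑ g ∈ D, μ.toFun g * c g := by
      rw [hD2]
      exact Finset.sum_filter_of_ne fun g hg h0 => left_ne_zero_of_mul h0
    have hfinal : ∑ g ∈ D2, μ.toFun g * Real.log (wInt m α n g f / μ.toFun g)
        ≤ Real.log N - ∑ g ∈ D2, μ.toFun g * c g := by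
      have e1 : ∑ g ∈ D2, μ.toFun g * (Real.log (Jf g / μ.toFun g) - c g)
          = (∑ g ∈ D2, μ.toFun g * Real.log (Jf g / μ.toFun g))
            - ∑ g ∈ D2, μ.toFun g * c g := by
        rw [← Finset.sum_sub_distrib]
        exact Finset.sum_congr rfl fun g _ => by ring
      calc ∑ g ∈ D2, μ.toFun g * Real.log (wInt m α n g f / μ.toFun g)
          ≤ ∑ g ∈ D2, μ.toFun g * (Real.log (Jf g / μ.toFun g) - c g) :=
            Finset.sum_le_sum hstep1
        _ = (∑ g ∈ D2, μ.toFun g * Real.log (Jf g / μ.toFun g))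
            - ∑ g ∈ D2, μ.toFun g * c g := e1
        _ ≤ Real.log (∑ g ∈ D2, Jf g) - ∑ g ∈ D2, μ.toFun g * c g := by
            linarith [hjensen]
        _ ≤ Real.log N - ∑ g ∈ D2, μ.toFun g * c g := by linarith [hlogn]
    rw [hTeq]
    have hμS2 : μ.toFun S ≤ (∑ g ∈ D2, μ.toFun g * c g) + ε := by
      rw [hwc]; exact hμS_le
    linarith [hfinal, hμS2]
  calc (μ.toFun S : EReal)
        + ⨆ f ∈ UnitL1 m, ∑ g ∈ D, tauTermR m α n (μ.toFun g) f g
      ≤ (μ.toFun S : EReal) + ((ε + Real.log N - μ.toFun S : ℝ) : EReal) :=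
        add_le_add_right (iSup₂_le key) _
    _ = ((ε + Real.log N : ℝ) : EReal) := by
        rw [← EReal.coe_add]
        norm_num

end TEntropyPaper
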